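/- Let C ⊆ F₂ⁿ be a linear code with generating matrix G (a matrix whose rows span C) having columns v₁,…,vₙ. Let B ⊆ {1,…,n}, let C_B = {c ∈ C : cᵢ = 0 for all i ∈ B}, and let U = span{vᵢ : i ∈ B}. Then the covering radius of C^⊥ is at most the covering radius of C_B^⊥ plus dim U. -/

import Mathlib

open Finset Submodule Module

/-- The dual of a set of vectors in `F₂ⁿ`: all vectors orthogonal to every element. -/
def dualSet {n : ℕ} (V : Set (Fin n → ZMod 2)) : Set (Fin n → ZMod 2) :=
  {y | ∀ x ∈ V, ∑ i, x i * y i = 0}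

/-- The covering radius of a subset `D ⊆ F₂ⁿ`: the least `R` such that every point of
`F₂ⁿ` is within Hamming distance `R` of some element of `D`. -/
noncomputable def coveringRadius {n : ℕ} (D : Set (Fin n → ZMod 2)) : ℕ :=
  sInf {R : ℕ | ∀ x : Fin n → ZMod 2, ∃ y ∈ D, hammingDist x y ≤ R}

noncomputable def dotForm (m : ℕ) : LinearMap.BilinForm (ZMod 2) (Fin m → ZMod 2) :=
  LinearMap.mk₂ (ZMod 2) (fun x y => ∑ r, x r * y r)
    (by intros; simp [add_mul, Finset.sum_add_distrib])
    (by intros; simp [Finset.mul_sum, mul_assoc])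
    (by intros; simp [mul_add, Finset.sum_add_distrib])
    (by intros; simp [Finset.mul_sum]; ring_nf; simp [mul_assoc, mul_comm, mul_left_comm])

lemma dotForm_apply {m : ℕ} (x y : Fin m → ZMod 2) : dotForm m x y = ∑ r, x r * y r := rfl

lemma dotForm_refl {m : ℕ} : (dotForm m).IsRefl := by
  intro x y h
  simpa [dotForm_apply, mul_comm] using h

lemma dotForm_nondeg {m : ℕ} : (dotForm m).Nondegenerate := by
  refine (LinearMap.IsRefl.nondegenerate_iff_separatingLeft (B := dotForm m) dotForm_refl).mpr ?_
  intro x h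
  funext r
  have := h (Pi.single r 1)
  simpa [dotForm_apply, Pi.single_apply, Finset.sum_ite_eq] using this

theorem covering_radius_split
    (n m : ℕ)
    (C : Submodule (ZMod 2) (Fin n → ZMod 2))
    (G : Fin m → Fin n → ZMod 2)
    (hG : Submodule.span (ZMod 2) (Set.range G) = C)
    (B : Finset (Fin n))
    (CB : Submodule (ZMod 2) (Fin n → ZMod 2))
    (hCB : (CB : Set (Fin n → ZMod 2)) = {c | c ∈ C ∧ ∀ i ∈ B, c i = 0})
    (U : Submodule (ZMod 2) (Fin m → ZMod 2))
    (hU : U = Submodule.span (ZMod 2) {w : Fin m → ZMod 2 | ∃ i ∈ B, w = fun r => G r i}) :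
    coveringRadius (dualSet (C : Set (Fin n → ZMod 2))) ≤
      coveringRadius (dualSet (CB : Set (Fin n → ZMod 2))) + Module.finrank (ZMod 2) U := by
  classical
  set D2 := dualSet (CB : Set (Fin n → ZMod 2)) with hD2
  have h0D2 : (0 : Fin n → ZMod 2) ∈ D2 := by intro c hc; simp
  have hne : ({R : ℕ | ∀ x : Fin n → ZMod 2, ∃ y ∈ D2, hammingDist x y ≤ R}).Nonempty :=
    ⟨n, fun x => ⟨0, h0D2, by
      simpa using (hammingDist_le_card_fintype : hammingDist x 0 ≤ Fintype.card (Fin n))⟩⟩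
  have hR : ∀ x : Fin n → ZMod 2, ∃ y ∈ D2, hammingDist x y ≤ coveringRadius D2 :=
    Nat.sInf_mem hne
  -- choose a basis of U among the columns
  set T : Set (Fin m → ZMod 2) := {w | ∃ i ∈ B, w = fun r => G r i} with hT
  obtain ⟨s, hsT, hspan, hli⟩ := exists_linearIndependent (ZMod 2) T
  have hTfin : T.Finite :=
    (Set.finite_range (fun i : Fin n => fun r => G r i)).subset
      (by rintro w ⟨i, hi, rfl⟩; exact ⟨i, rfl⟩)
  have hsfin : s.Finite := hTfin.subset hsT
  haveI := hsfin.fintype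
  have hcard : Module.finrank (ZMod 2) U = s.toFinset.card := by
    rw [hU, ← hspan]; exact finrank_span_set_eq_card hli
  have hGmem : ∀ r, G r ∈ C := fun r => hG ▸ subset_span ⟨r, rfl⟩
  have key : ∀ x : Fin n → ZMod 2, ∃ y ∈ dualSet (C : Set (Fin n → ZMod 2)),
      hammingDist x y ≤ coveringRadius D2 + Module.finrank (ZMod 2) U := by
    intro x
    obtain ⟨y', hy', hd⟩ := hR x
    set u : Fin m → ZMod 2 := fun r => ∑ i, G r i * y' i with hu
    have huU : u ∈ U := by
      have horth : u ∈ (dotForm m).orthogonal ((dotForm m).orthogonal U) := by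
        rw [LinearMap.BilinForm.mem_orthogonal_iff]
        intro w hw
        have hcol : ∀ i ∈ B, ∑ r, G r i * w r = 0 := by
          intro i hi
          exact hw _ (hU ▸ subset_span ⟨i, hi, rfl⟩)
        set c : Fin n → ZMod 2 := fun i => ∑ r, w r * G r i with hc
        have hcC : c ∈ C := by
          have : c = ∑ r, w r • G r := by
            funext i; simp [hc, Finset.sum_apply]
          rw [this]
          exact Submodule.sum_mem _ fun r _ => Submodule.smul_mem _ _ (hGmem r)
        have hcCB : c ∈ (CB : Set (Fin n → ZMod 2)) := by
          rw [hCB]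
          exact ⟨hcC, fun i hi => by
            have := hcol i hi
            simpa [hc, mul_comm] using this⟩
        have hzero : ∑ i, c i * y' i = 0 := hy' c hcCB
        show dotForm m w u = 0
        rw [dotForm_apply, ← hzero]
        rw [show (∑ r, w r * u r) = ∑ r, ∑ i, w r * (G r i * y' i) by
          simp [hu, Finset.mul_sum]]
        rw [Finset.sum_comm]
        exact Finset.sum_congr rfl fun i _ => by simp [hc, Finset.sum_mul, mul_assoc]
      rwa [(dotForm m).orthogonal_orthogonal dotForm_nondeg dotForm_refl] at horth
    have hus : u ∈ span (ZMod 2) ((s.toFinset : Finset (Fin m → ZMod 2)) : Set (Fin m → ZMod 2)) := by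
      rw [Set.coe_toFinset]
      rw [hU, ← hspan] at huU
      exact huU
    obtain ⟨f, hf⟩ := mem_span_finset.1 hus
    set st := s.toFinset with hst
    have hchoice : ∀ v ∈ st, ∃ i, i ∈ B ∧ v = fun r => G r i := by
      intro v hv
      exact hsT (Set.mem_toFinset.1 hv)
    let ι : {v // v ∈ st} → Fin n := fun v => (hchoice v.1 v.2).choose
    have hι : ∀ v : {v // v ∈ st}, ι v ∈ B ∧ v.1 = fun r => G r (ι v) :=
      fun v => (hchoice v.1 v.2).choose_spec
    set y : Fin n → ZMod 2 := y' + ∑ v ∈ st.attach, f v.1 • (Pi.single (ι v) 1 : Fin n → ZMod 2) with hy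
    have hGy : ∀ r, ∑ i, G r i * y i = 0 := by
      intro r
      have h1 : ∀ v : {v // v ∈ st},
          ∑ i, G r i * (f v.1 • (Pi.single (ι v) 1 : Fin n → ZMod 2)) i = f v.1 * G r (ι v) := by
        intro v
        simp [Pi.single_apply, mul_ite, Finset.sum_ite_eq', mul_comm]
      have h2 : ∑ i, G r i * y i = u r + ∑ v ∈ st.attach, f v.1 * G r (ι v) := by
        simp only [hy, Pi.add_apply, Finset.sum_apply, mul_add, Finset.sum_add_distrib]
        congr 1
        rw [show (∑ i, G r i * ∑ v ∈ st.attach, (f v.1 • (Pi.single (ι v) 1 : Fin n → ZMod 2)) i)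
            = ∑ i, ∑ v ∈ st.attach, G r i * (f v.1 • (Pi.single (ι v) 1 : Fin n → ZMod 2)) i by
          simp [Finset.mul_sum]]
        rw [Finset.sum_comm]
        exact Finset.sum_congr rfl fun v _ => h1 v
      have h3 : u r = ∑ v ∈ st.attach, f v.1 * G r (ι v) := by
        have h4 : u r = ∑ v ∈ st, f v * v r := by
          rw [← hf.2]; simp [Finset.sum_apply]
        rw [h4, ← Finset.sum_attach st (fun v => f v * v r)]
        exact Finset.sum_congr rfl fun v _ => by rw [congrFun (hι v).2 r]
      rw [h2, ← h3]
      have : ∀ a : ZMod 2, a + a = 0 := by decide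
      exact this _
    have hyC : y ∈ dualSet (C : Set (Fin n → ZMod 2)) := by
      intro c hc
      let ℓ : (Fin n → ZMod 2) →ₗ[ZMod 2] ZMod 2 :=
        { toFun := fun c => ∑ i, c i * y i
          map_add' := by intros; simp [add_mul, Finset.sum_add_distrib]
          map_smul' := by intros; simp [Finset.mul_sum, mul_assoc] }
      have hle : C ≤ LinearMap.ker ℓ := by
        rw [← hG, Submodule.span_le]
        rintro _ ⟨r, rfl⟩
        simp only [SetLike.mem_coe, LinearMap.mem_ker]
        exact hGy r
      exact hle hc
    have hdy : hammingDist y' y ≤ st.card := by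
      have h5 : hammingDist y' y ≤ (st.attach.image ι).card := by
        apply Finset.card_le_card
        intro j hj
        simp only [Finset.mem_filter, Finset.mem_univ, true_and] at hj
        by_contra hjE
        apply hj
        have hz : ∀ v : {v // v ∈ st}, (f v.1 • (Pi.single (ι v) 1 : Fin n → ZMod 2)) j = 0 := by
          intro v
          have hne' : j ≠ ι v := fun h => hjE (h ▸ Finset.mem_image_of_mem ι (Finset.mem_attach _ v))
          simp [Pi.single_eq_of_ne hne']
        have hyj : y j = y' j := by
          simp only [hy, Pi.add_apply, Finset.sum_apply]
          rw [Finset.sum_eq_zero fun v _ => hz v, add_zero]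
        rw [hyj]
      calc hammingDist y' y ≤ (st.attach.image ι).card := h5
        _ ≤ st.attach.card := Finset.card_image_le
        _ = st.card := Finset.card_attach
    refine ⟨y, hyC, ?_⟩
    calc hammingDist x y ≤ hammingDist x y' + hammingDist y' y := hammingDist_triangle _ _ _
      _ ≤ coveringRadius D2 + Module.finrank (ZMod 2) U := by
          rw [hcard]; exact add_le_add hd hdy
  exact Nat.sInf_le key
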